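/- Let α ∈ ℝ be irrational and let φ_t(x, y, z) = (x + t, y + αt, z) be the flow on X = (AddCircle (1:ℝ))³ which is a linear flow with slope α in the first two coordinates and fixes the third coordinate. Then φ has no attractor: there do not exist a proper subset A ⊊ X and a nonempty open set U ⊆ X with closure(φ_t(U)) ⊆ U for every t > 0 and A = ⋂_{t ≥ 0} closure(φ_t(U)). -/

import Mathlib

open Set AddCircle

private lemma natCoe_zero (n : ℕ) : ((n : ℝ) : AddCircle (1:ℝ)) = 0 := by
  rw [AddCircle.coe_eq_zero_iff]
  exact ⟨n, by simp⟩

private lemma norm_coe_le (x : ℝ) : ‖((x : ℝ) : AddCircle (1:ℝ))‖ ≤ |x| := by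
  rw [AddCircle.norm_eq]
  simpa using round_le x 0

private lemma exists_lift (c : AddCircle (1:ℝ)) :
    ∃ β : ℝ, (β : AddCircle (1:ℝ)) = c ∧ |β| = ‖c‖ := by
  obtain ⟨x, rfl⟩ := Quot.exists_rep c
  refine ⟨x - round x, ?_, ?_⟩
  · show ((x - (round x : ℝ) : ℝ) : AddCircle (1:ℝ)) = _
    rw [AddCircle.coe_sub]
    have : (((round x : ℝ)) : AddCircle (1:ℝ)) = 0 := by
      rw [AddCircle.coe_eq_zero_iff]; exact ⟨round x, by simp⟩
    rw [this, sub_zero]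
    rfl
  · rw [show Quot.mk _ x = ((x : ℝ) : AddCircle (1:ℝ)) from rfl, AddCircle.norm_eq]
    simp

private lemma coe_mul_nat_ne_zero {α : ℝ} (hα : Irrational α) {n : ℕ} (hn : 0 < n) :
    ((α * n : ℝ) : AddCircle (1:ℝ)) ≠ 0 := by
  intro h
  rw [AddCircle.coe_eq_zero_iff] at h
  obtain ⟨m, hm⟩ := h
  have hn' : (n : ℝ) ≠ 0 := Nat.cast_ne_zero.mpr hn.ne'
  have hm' : (m : ℝ) = α * n := by simpa using hm
  have : α = (m : ℝ) / n := by
    field_simp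
    linarith
  exact (hα.ne_rat ((m : ℚ) / (n : ℚ))) (by rw [this]; push_cast; ring)

private lemma exists_small_step {α : ℝ} (hα : Irrational α) {ε : ℝ} (hε : 0 < ε) :
    ∃ n : ℕ, 0 < n ∧ ‖((α * n : ℝ) : AddCircle (1:ℝ))‖ < ε := by
  haveI : Fact ((0:ℝ) < 1) := ⟨one_pos⟩
  set u : ℕ → AddCircle (1:ℝ) := fun n => ((α * n : ℝ) : AddCircle (1:ℝ)) with hu
  obtain ⟨t, ht⟩ := Metric.totallyBounded_iff.mp
    (isCompact_univ (X := AddCircle (1:ℝ))).totallyBounded (ε/2) (by positivity)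
  choose g hg using fun n : ℕ =>
    Set.mem_iUnion₂.mp (ht.2 (Set.mem_univ (u n)))
  have : ∃ i j : ℕ, i ≠ j ∧ (⟨g i, (hg i).1⟩ : t) = ⟨g j, (hg j).1⟩ := by
    haveI : Finite t := ht.1
    exact Finite.exists_ne_map_eq_of_infinite _
  obtain ⟨i, j, hij, hgij⟩ := this
  wlog hlt : i < j generalizing i j
  · exact this j i hij.symm hgij.symm (hij.lt_or_gt.resolve_left hlt)
  refine ⟨j - i, Nat.sub_pos_of_lt hlt, ?_⟩
  have hd : dist (u i) (u j) < ε := by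
    calc dist (u i) (u j) ≤ dist (u i) (g i) + dist (g i) (u j) := dist_triangle _ _ _
    _ < ε/2 + ε/2 := by
        apply add_lt_add ((hg i).2)
        rw [dist_comm]
        have := (hg j).2
        rw [show g i = g j from congrArg Subtype.val hgij]
        exact this
    _ = ε := by ring
  have hsub : ((j - i : ℕ) : ℝ) = (j : ℝ) - i := by
    push_cast [Nat.cast_sub hlt.le]; ring
  have : ((α * (j - i : ℕ) : ℝ) : AddCircle (1:ℝ)) = u j - u i := by
    rw [hu]
    rw [← AddCircle.coe_sub]
    congr 1
    rw [hsub]; ring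
  rw [this]
  rwa [dist_eq_norm, norm_sub_rev] at hd

private lemma dense_steps {α : ℝ} (hα : Irrational α) (c y : AddCircle (1:ℝ))
    {ε : ℝ} (hε : 0 < ε) : ∃ n : ℕ, dist (c + ((α * n : ℝ) : AddCircle (1:ℝ))) y < ε := by
  obtain ⟨n₀, hn₀, hsmall⟩ := exists_small_step hα hε
  obtain ⟨β, hβc, hβn⟩ := exists_lift ((α * n₀ : ℝ) : AddCircle (1:ℝ))
  have hβne : β ≠ 0 := by
    intro h
    apply coe_mul_nat_ne_zero hα hn₀
    rw [← hβc, h]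
    norm_cast
  have hβε : |β| < ε := by rwa [hβn]
  obtain ⟨ξ, hξc, hξn⟩ := exists_lift (y - c)
  have hξ1 : |ξ| ≤ 1/2 := by
    rw [hξn]
    simpa using AddCircle.norm_le_half_period (1:ℝ) one_ne_zero (x := y - c)
  -- choose a lift ξ' of y - c with ξ'/β ≥ 0
  obtain ⟨ξ', hξ'c, hξ'β⟩ : ∃ ξ' : ℝ, ((ξ' : ℝ) : AddCircle (1:ℝ)) = y - c ∧ 0 ≤ ξ' / β := by
    rcases le_or_gt 0 (ξ / β) with h | h
    · exact ⟨ξ, hξc, h⟩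
    rcases lt_or_ge 0 β with hb | hb
    · refine ⟨ξ + 1, by rw [AddCircle.coe_add_period]; exact hξc, ?_⟩
      have := abs_le.mp hξ1
      apply div_nonneg (by linarith) hb.le
    · have hb' : β < 0 := lt_of_le_of_ne hb hβne
      refine ⟨ξ - 1, ?_, ?_⟩
      · rw [AddCircle.coe_sub]
        have : (((1:ℝ)) : AddCircle (1:ℝ)) = 0 := by
          rw [AddCircle.coe_eq_zero_iff]; exact ⟨1, by simp⟩
        rw [this, sub_zero, hξc]
      · have hξpos : 0 < ξ := by
          by_contra hc
          exact absurd (div_nonneg_of_nonpos (not_lt.mp hc) hb) (not_le.mpr h)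
        apply div_nonneg_of_nonpos _ hb
        have := abs_le.mp hξ1
        linarith
  -- now take k = ⌊ξ'/β⌋ steps of size β
  set q : ℝ := ξ' / β with hq
  set k : ℕ := ⌊q⌋.toNat with hk
  have hkq : ((k : ℕ) : ℝ) = (⌊q⌋ : ℝ) := by
    have := Int.toNat_of_nonneg (Int.floor_nonneg.mpr hξ'β)
    rw [hk, ← this]
    push_cast
    rw [this]
  have hξ'q : ξ' = q * β := by
    rw [hq, div_mul_cancel₀ _ hβne]
  have hbound : |(k : ℝ) * β - ξ'| < ε := by
    have h1 : (⌊q⌋ : ℝ) ≤ q := Int.floor_le q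
    have h2 : q < (⌊q⌋ : ℝ) + 1 := Int.lt_floor_add_one q
    have : |(k : ℝ) * β - ξ'| < |β| := by
      rw [hξ'q, ← sub_mul, abs_mul]
      have h3 : |(k:ℝ) - q| < 1 := by
        rw [abs_lt]; constructor <;> [skip; skip] <;> rw [hkq] <;> linarith
      calc |(k:ℝ) - q| * |β| < 1 * |β| := by
            apply mul_lt_mul_of_pos_right h3 (abs_pos.mpr hβne)
        _ = |β| := one_mul _
    linarith
  refine ⟨n₀ * k, ?_⟩
  have hcoe : ((α * (n₀ * k : ℕ) : ℝ) : AddCircle (1:ℝ)) = (((k:ℝ) * β : ℝ) : AddCircle (1:ℝ)) := by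
    have h1 : (α * (n₀ * k : ℕ) : ℝ) = k • (α * n₀) := by push_cast; ring
    have h2 : ((k:ℝ) * β : ℝ) = k • β := by push_cast; ring
    rw [h1, h2, AddCircle.coe_nsmul, AddCircle.coe_nsmul, hβc]
  rw [hcoe]
  have : c + (((k:ℝ) * β : ℝ) : AddCircle (1:ℝ)) - y
      = (((k:ℝ) * β - ξ' : ℝ) : AddCircle (1:ℝ)) := by
    rw [AddCircle.coe_sub, hξ'c]
    abel
  rw [dist_eq_norm, this]
  exact lt_of_le_of_lt (norm_coe_le _) hbound


/-- The flow on `(ℝ/ℤ)³` which is the linear flow with slope `α` in the first two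
coordinates and fixes the third coordinate. -/
noncomputable def linearFlowT2xS1 (α : ℝ) (t : ℝ)
    (q : AddCircle (1 : ℝ) × AddCircle (1 : ℝ) × AddCircle (1 : ℝ)) :
    AddCircle (1 : ℝ) × AddCircle (1 : ℝ) × AddCircle (1 : ℝ) :=
  (q.1 + (t : AddCircle (1 : ℝ)), q.2.1 + ((α * t : ℝ) : AddCircle (1 : ℝ)), q.2.2)

/-- for irrational `α`, the flow `φ_t(x, y, z) = (x + t, y + αt, z)` on
`(ℝ/ℤ)³` has no attractor: there is no proper subset `A` and nonempty open attractor
block `U` with `A = ⋂_{t ≥ 0} closure (φ_t '' U)`. -/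
theorem linear_flow_T2xS1_no_attractor (α : ℝ) (hα : Irrational α) :
    ¬ ∃ (A U : Set (AddCircle (1 : ℝ) × AddCircle (1 : ℝ) × AddCircle (1 : ℝ))),
        A ≠ Set.univ ∧ U.Nonempty ∧ IsOpen U ∧
        (∀ t > (0 : ℝ), closure (linearFlowT2xS1 α t '' U) ⊆ U) ∧
        A = ⋂ t ∈ Set.Ici (0 : ℝ), closure (linearFlowT2xS1 α t '' U) := by
  haveI : Fact ((0:ℝ) < 1) := ⟨one_pos⟩
  rintro ⟨A, U, hA, ⟨u, huU⟩, hUo, hblock, rfl⟩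
  have hcont : ∀ t : ℝ, Continuous (linearFlowT2xS1 α t) := by
    intro t
    unfold linearFlowT2xS1
    fun_prop
  have hcomp : ∀ s t : ℝ, ∀ q, linearFlowT2xS1 α t (linearFlowT2xS1 α s q)
      = linearFlowT2xS1 α (s + t) q := by
    intro s t q
    simp only [linearFlowT2xS1, mul_add, AddCircle.coe_add, add_assoc]
  have hfwd : ∀ s : ℝ, 0 ≤ s → ∀ w ∈ U, linearFlowT2xS1 α s w ∈ U := by
    intro s hs w hw
    rcases hs.eq_or_lt with h | h
    · rw [← h]
      simpa [linearFlowT2xS1] using hw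
    · exact hblock s h (subset_closure ⟨w, hw, rfl⟩)
  -- the set of third coordinates of U is clopen and nonempty, hence everything
  set f : AddCircle (1:ℝ) × AddCircle (1:ℝ) × AddCircle (1:ℝ) → AddCircle (1:ℝ) :=
    fun w => w.2.2 with hf
  set C : Set (AddCircle (1:ℝ)) := f '' U with hC
  have hCo : IsOpen C := by
    have : C = Prod.snd '' (Prod.snd '' U) := by rw [Set.image_image]
    rw [this]
    exact isOpenMap_snd _ (isOpenMap_snd _ hUo)
  have hCc : IsClosed C := by
    rw [← closure_subset_iff_isClosed]
    intro z hz
    have hK : IsCompact (f '' closure U) :=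
      (isClosed_closure.isCompact).image (by fun_prop)
    have h1 : closure C ⊆ f '' closure U :=
      closure_minimal (Set.image_mono subset_closure) hK.isClosed
    obtain ⟨q, hq, rfl⟩ := h1 hz
    have h2 : linearFlowT2xS1 α 1 q ∈ U :=
      hblock 1 one_pos (image_closure_subset_closure_image (hcont 1) ⟨q, hq, rfl⟩)
    exact ⟨_, h2, rfl⟩
  have hCuniv : C = Set.univ := IsClopen.eq_univ ⟨hCc, hCo⟩ ⟨f u, u, huU, rfl⟩
  -- the intersection is everything
  apply hA
  rw [Set.eq_univ_iff_forall]
  rintro ⟨x, y, z⟩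
  simp only [Set.mem_iInter, Set.mem_Ici]
  intro t ht
  have hz : z ∈ C := hCuniv ▸ Set.mem_univ z
  obtain ⟨⟨a, b, z'⟩, hw, hz'⟩ := hz
  have hz'' : z' = z := hz'
  rw [hz''] at hw
  obtain ⟨r, hr⟩ := Quot.exists_rep (x - a)
  have hr' : ((r : ℝ) : AddCircle (1:ℝ)) = x - a := hr
  obtain ⟨m, hm⟩ := exists_nat_ge (t - r)
  rw [Metric.mem_closure_iff]
  intro ε hε
  obtain ⟨n, hn⟩ := dense_steps hα (b + ((α * (r + m) : ℝ) : AddCircle (1:ℝ))) y hε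
  set s : ℝ := r + m + n with hs
  have hst : t ≤ s := by
    have h1 : (0:ℝ) ≤ n := Nat.cast_nonneg n
    rw [hs]; linarith
  have hpt : linearFlowT2xS1 α s (a, b, z)
      = (x, b + ((α * (r + m) : ℝ) : AddCircle (1:ℝ)) + ((α * n : ℝ) : AddCircle (1:ℝ)), z) := by
    simp only [linearFlowT2xS1]
    refine Prod.ext ?_ (Prod.ext ?_ rfl)
    · show a + ((s : ℝ) : AddCircle (1:ℝ)) = x
      have : ((s : ℝ) : AddCircle (1:ℝ)) = ((r : ℝ) : AddCircle (1:ℝ)) := by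
        rw [hs, AddCircle.coe_add, AddCircle.coe_add, natCoe_zero, natCoe_zero]
        abel
      rw [this, hr']
      abel
    · show b + ((α * s : ℝ) : AddCircle (1:ℝ)) = _
      have : (α * s : ℝ) = α * (r + m) + α * n := by rw [hs]; ring
      rw [this, AddCircle.coe_add]
      abel
  refine ⟨linearFlowT2xS1 α s (a, b, z),
    ⟨linearFlowT2xS1 α (s - t) (a, b, z), hfwd _ (by linarith) _ hw, by
      rw [hcomp, sub_add_cancel]⟩, ?_⟩
  rw [hpt, Prod.dist_eq, Prod.dist_eq]
  exact max_lt (by simpa using hε) (max_lt (by rw [dist_comm]; exact hn) (by simpa using hε))
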